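/- Suppose (W, W') ∈ ℝ^k × ℝ^k is an exchangeable pair satisfying E(W'|W) = (I_k − Λ)W for an invertible matrix Λ, ‖W − W'‖₂ ≤ K, and E(e^{θᵗW}) < ∞ for all θ. Then for each coordinate i and every w_i ≥ 0, P(W_i ≥ w_i) ≤ exp(−w_i² / (2K²ν₁)) and P(W_i ≤ −w_i) ≤ exp(−w_i² / (2K²ν₁)), where ν₁ = 1/σ₁(Λ). -/

import Mathlib

open MeasureTheory ProbabilityTheory Real Matrix

/-- The Euclidean (ℓ²) norm on `Fin k → ℝ`. -/
noncomputable def norm2 {k : ℕ} (x : Fin k → ℝ) : ℝ := Real.sqrt (∑ i, x i ^ 2)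

/-- The smallest singular value of a square real matrix: the infimum of `‖Λx‖₂`
over unit vectors `x`. -/
noncomputable def smallestSingularValue {k : ℕ} (Λ : Matrix (Fin k) (Fin k) ℝ) : ℝ :=
  sInf {r | ∃ x : Fin k → ℝ, norm2 x = 1 ∧ r = norm2 (Λ.mulVec x)}


lemma norm2_nonneg {k : ℕ} (x : Fin k → ℝ) : 0 ≤ norm2 x := Real.sqrt_nonneg _

lemma abs_coord_le_norm2 {k : ℕ} (x : Fin k → ℝ) (i : Fin k) : |x i| ≤ norm2 x := by
  rw [← Real.sqrt_sq_eq_abs (x i)]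
  exact Real.sqrt_le_sqrt (Finset.single_le_sum (fun j _ => sq_nonneg (x j)) (Finset.mem_univ i))

lemma norm2_smul {k : ℕ} (c : ℝ) (x : Fin k → ℝ) : norm2 (c • x) = |c| * norm2 x := by
  simp only [norm2, Pi.smul_apply, smul_eq_mul, mul_pow, ← Finset.mul_sum]
  rw [Real.sqrt_mul (sq_nonneg c), Real.sqrt_sq_eq_abs]

lemma norm2_pos {k : ℕ} {x : Fin k → ℝ} (hx : x ≠ 0) : 0 < norm2 x := by
  have h : ∑ i, x i ^ 2 ≠ 0 := by
    intro h0
    apply hx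
    funext j
    have := (Finset.sum_eq_zero_iff_of_nonneg (fun j _ => sq_nonneg (x j))).mp h0 j
      (Finset.mem_univ j)
    exact pow_eq_zero_iff (two_ne_zero) |>.mp this
  exact Real.sqrt_pos.mpr <| lt_of_le_of_ne (Finset.sum_nonneg fun j _ => sq_nonneg _)
    (Ne.symm h)

lemma ssv_mul_le {k : ℕ} (Λ : Matrix (Fin k) (Fin k) ℝ) (x : Fin k → ℝ) :
    smallestSingularValue Λ * norm2 x ≤ norm2 (Λ.mulVec x) := by
  by_cases hx : x = 0
  · subst hx
    have h0 : norm2 (0 : Fin k → ℝ) = 0 := by simp [norm2]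
    rw [h0, mul_zero]
    exact norm2_nonneg _
  · have hpos := norm2_pos hx
    set c := (norm2 x)⁻¹ with hc
    have hu : norm2 (c • x) = 1 := by
      rw [norm2_smul, abs_of_pos (inv_pos.mpr hpos), inv_mul_cancel₀ hpos.ne']
    have hmem : norm2 (Λ.mulVec (c • x)) ∈
        {r | ∃ y : Fin k → ℝ, norm2 y = 1 ∧ r = norm2 (Λ.mulVec y)} := ⟨c • x, hu, rfl⟩
    have hbdd : BddBelow {r | ∃ y : Fin k → ℝ, norm2 y = 1 ∧ r = norm2 (Λ.mulVec y)} :=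
      ⟨0, fun r ⟨y, _, hr⟩ => hr ▸ norm2_nonneg _⟩
    have hle := csInf_le hbdd hmem
    have heq : norm2 (Λ.mulVec (c • x)) = c * norm2 (Λ.mulVec x) := by
      rw [Matrix.mulVec_smul, norm2_smul, abs_of_pos (inv_pos.mpr hpos)]
    rw [heq] at hle
    calc smallestSingularValue Λ * norm2 x ≤ (c * norm2 (Λ.mulVec x)) * norm2 x := by
          exact mul_le_mul_of_nonneg_right hle hpos.le
      _ = norm2 (Λ.mulVec x) := by
          rw [hc, mul_assoc, mul_comm (norm2 _) (norm2 x), ← mul_assoc, inv_mul_cancel₀ hpos.ne', one_mul]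

lemma abs_exp_sub_exp_le (a b : ℝ) : |Real.exp a - Real.exp b| ≤ |a - b| * (Real.exp a + Real.exp b) := by
  wlog h : b ≤ a generalizing a b
  · have := this b a (le_of_not_ge h)
    rw [abs_sub_comm, abs_sub_comm b a] at this
    linarith [this]
  have h1 : (b - a) + 1 ≤ Real.exp (b - a) := Real.add_one_le_exp _
  have h2 : Real.exp (b - a) = Real.exp b / Real.exp a := by rw [Real.exp_sub]
  have ha := Real.exp_pos a
  have hb := Real.exp_pos b
  have hmono : Real.exp b ≤ Real.exp a := Real.exp_le_exp.mpr h
  rw [abs_of_nonneg (by linarith), abs_of_nonneg (by linarith)]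
  have : Real.exp a * ((b-a)+1) ≤ Real.exp b := by
    rw [h2] at h1; calc Real.exp a * ((b-a)+1) ≤ Real.exp a * (Real.exp b / Real.exp a) :=
          mul_le_mul_of_nonneg_left h1 ha.le
      _ = Real.exp b := by field_simp
  nlinarith

lemma abs_le_exp_add_exp_neg (y : ℝ) : |y| ≤ Real.exp y + Real.exp (-y) := by
  rw [abs_le]
  constructor
  · nlinarith [Real.add_one_le_exp (-y), Real.exp_pos y]
  · nlinarith [Real.add_one_le_exp y, Real.exp_pos (-y)]

/-- Coordinatewise concentration via exchangeable pairs: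
`P(Wᵢ ≥ wᵢ), P(Wᵢ ≤ -wᵢ) ≤ exp(-wᵢ²/(2K²ν₁))` where `ν₁ = 1/σ₁(Λ)`. -/
theorem coordinate_concentration
    {Ω : Type*} [MeasurableSpace Ω] (μ : Measure Ω) [IsProbabilityMeasure μ]
    {k : ℕ} (W W' : Ω → Fin k → ℝ)
    (hWmeas : Measurable W) (hW'meas : Measurable W')
    (hexch : IdentDistrib (fun ω => (W ω, W' ω)) (fun ω => (W' ω, W ω)) μ μ)
    (Λ : Matrix (Fin k) (Fin k) ℝ) (hΛ : IsUnit Λ.det)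
    (hcond : ∀ i, μ[fun ω => W' ω i | MeasurableSpace.comap W inferInstance]
      =ᵐ[μ] fun ω => ∑ j, (1 - Λ) i j * W ω j)
    (K : ℝ) (hK : ∀ᵐ ω ∂μ, norm2 (fun i => W ω i - W' ω i) ≤ K)
    (hmgf : ∀ θ : Fin k → ℝ, Integrable (fun ω => Real.exp (θ ⬝ᵥ W ω)) μ)
    (i : Fin k) (w : ℝ) (hw : 0 ≤ w) :
    μ {ω | w ≤ W ω i}
        ≤ ENNReal.ofReal
            (Real.exp (-(w ^ 2 / (2 * K ^ 2 * (1 / smallestSingularValue Λ))))) ∧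
      μ {ω | W ω i ≤ -w}
        ≤ ENNReal.ofReal
            (Real.exp (-(w ^ 2 / (2 * K ^ 2 * (1 / smallestSingularValue Λ))))) := by
  set s := smallestSingularValue Λ with hs
  by_cases htriv : 2 * K ^ 2 * (1 / s) ≤ 0
  · have hexp : (1:ℝ) ≤ Real.exp (-(w ^ 2 / (2 * K ^ 2 * (1 / s)))) := by
      rw [Real.one_le_exp_iff]
      have := div_nonpos_of_nonneg_of_nonpos (sq_nonneg w) htriv
      linarith
    constructor <;>
      exact le_trans prob_le_one (by rwa [← ENNReal.one_le_ofReal] at hexp)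
  push_neg at htriv
  -- nontrivial case: K > 0, s > 0
  have hν : 0 < 1 / s := by
    by_contra h
    push_neg at h
    have : 2 * K ^ 2 * (1 / s) ≤ 0 :=
      mul_nonpos_of_nonneg_of_nonpos (by positivity) h
    linarith
  have hspos : 0 < s := one_div_pos.mp hν
  haveI : (MeasureTheory.ae μ).NeBot := ae_neBot.mpr (IsProbabilityMeasure.ne_zero μ)
  have hK0 : 0 ≤ K := by
    obtain ⟨ω, hω⟩ := hK.exists
    exact le_trans (norm2_nonneg _) hω
  have hKpos : 0 < K := by
    rcases eq_or_lt_of_le hK0 with h | h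
    · rw [← h] at htriv; norm_num at htriv
    · exact h
  set c : ℝ := K ^ 2 * (1 / s) with hc
  have hcpos : 0 < c := by positivity
  set X : Ω → ℝ := fun ω => W ω i with hX
  set X' : Ω → ℝ := fun ω => W' ω i with hX'
  have hXm : Measurable X := (measurable_pi_apply i).comp hWmeas
  have hX'm : Measurable X' := (measurable_pi_apply i).comp hW'meas
  have hWj : ∀ j, Measurable fun ω => W ω j := fun j => (measurable_pi_apply j).comp hWmeas
  have hW'j : ∀ j, Measurable fun ω => W' ω j := fun j => (measurable_pi_apply j).comp hW'meas
  have hEXm : ∀ t : ℝ, Measurable fun ω => Real.exp (t * X ω) :=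
    fun t => Real.measurable_exp.comp (measurable_const.mul hXm)
  have hEX'm : ∀ t : ℝ, Measurable fun ω => Real.exp (t * X' ω) :=
    fun t => Real.measurable_exp.comp (measurable_const.mul hX'm)
  -- single-coordinate-pair mgf integrability
  have hIntC : ∀ (a b : ℝ) (j : Fin k),
      Integrable (fun ω => Real.exp (a * W ω i + b * W ω j)) μ := by
    intro a b j
    have h := hmgf (Pi.single i a + Pi.single j b)
    have heq : ∀ ω, (Pi.single i a + Pi.single j b) ⬝ᵥ W ω = a * W ω i + b * W ω j := by
      intro ω
      rw [add_dotProduct]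
      simp [dotProduct, Pi.single_apply, ite_mul]
    simp only [heq] at h
    exact h
  have hIntX : ∀ t : ℝ, Integrable (fun ω => Real.exp (t * X ω)) μ := by
    intro t
    simpa using hIntC t 0 i
  -- mgf function
  set m : ℝ → ℝ := fun t => ∫ ω, Real.exp (t * X ω) ∂μ with hm
  have hmgfeq : ∀ t, mgf X μ t = m t := fun t => rfl
  have hmpos : ∀ t, 0 < m t := by
    intro t
    rw [← hmgfeq]
    exact mgf_pos (hIntX t)
  -- integrability of products
  have hIntXabs : ∀ (t : ℝ) (j : Fin k),
      Integrable (fun ω => Real.exp (t * X ω) * |W ω j|) μ := by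
    intro t j
    refine ((hIntC t 1 j).add (hIntC t (-1) j)).mono'
      ((hEXm t).mul (measurable_abs.comp (hWj j))).aestronglyMeasurable
      (ae_of_all _ fun ω => ?_)
    rw [Real.norm_eq_abs, abs_mul, abs_abs, Real.abs_exp]
    calc Real.exp (t * X ω) * |W ω j|
        ≤ Real.exp (t * X ω) * (Real.exp (W ω j) + Real.exp (-(W ω j))) :=
          mul_le_mul_of_nonneg_left (abs_le_exp_add_exp_neg _) (Real.exp_pos _).le
      _ = Real.exp (t * X ω + 1 * W ω j) + Real.exp (t * X ω + -1 * W ω j) := by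
          rw [mul_add, ← Real.exp_add, ← Real.exp_add]; ring_nf
  have hIntXW : ∀ (t : ℝ) (j : Fin k),
      Integrable (fun ω => Real.exp (t * X ω) * W ω j) μ := by
    intro t j
    refine (hIntXabs t j).mono' ((hEXm t).mul (hWj j)).aestronglyMeasurable
      (ae_of_all _ fun ω => ?_)
    rw [Real.norm_eq_abs, abs_mul, Real.abs_exp]
  have hKcoord : ∀ᵐ ω ∂μ, ∀ j, |W ω j - W' ω j| ≤ K := by
    filter_upwards [hK] with ω hω j
    exact le_trans (abs_coord_le_norm2 (fun l => W ω l - W' ω l) j) hω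
  have hIntXW' : ∀ (t : ℝ) (j : Fin k),
      Integrable (fun ω => Real.exp (t * X ω) * W' ω j) μ := by
    intro t j
    refine ((hIntXabs t j).add ((hIntX t).const_mul K)).mono'
      ((hEXm t).mul (hW'j j)).aestronglyMeasurable ?_
    filter_upwards [hKcoord] with ω hω
    rw [Real.norm_eq_abs, abs_mul, Real.abs_exp]
    have h1 : |W' ω j| ≤ |W ω j| + K := by
      have h2 : |W' ω j| - |W ω j| ≤ |W' ω j - W ω j| := abs_sub_abs_le_abs_sub _ _
      rw [abs_sub_comm] at h2
      have := hω j
      linarith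
    have he := (Real.exp_pos (t * X ω)).le
    calc Real.exp (t * X ω) * |W' ω j| ≤ Real.exp (t * X ω) * (|W ω j| + K) :=
          mul_le_mul_of_nonneg_left h1 he
      _ = Real.exp (t * X ω) * |W ω j| + K * Real.exp (t * X ω) := by ring
  -- identically distributed marginals
  have idWW' : IdentDistrib W W' μ μ := hexch.comp measurable_fst
  have idX : IdentDistrib X X' μ μ := idWW'.comp (measurable_pi_apply i)
  have hIntX' : ∀ t : ℝ, Integrable (fun ω => Real.exp (t * X' ω)) μ := by
    intro t
    have hid2 : IdentDistrib (fun ω => Real.exp (t * X ω)) (fun ω => Real.exp (t * X' ω)) μ μ :=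
      idX.comp (Real.measurable_exp.comp (measurable_const_mul t))
    exact hid2.integrable_iff.mp (hIntX t)
  have hIntExpX' : ∀ t : ℝ, ∫ ω, Real.exp (t * X' ω) ∂μ = m t := by
    intro t
    have hid2 : IdentDistrib (fun ω => Real.exp (t * X ω)) (fun ω => Real.exp (t * X' ω)) μ μ :=
      idX.comp (Real.measurable_exp.comp (measurable_const_mul t))
    exact hid2.integral_eq.symm
  -- conditional expectation step
  have hcondInt : ∀ (t : ℝ) (j : Fin k),
      ∫ ω, Real.exp (t * X ω) * W' ω j ∂μ
        = ∫ ω, Real.exp (t * X ω) * (∑ l, (1 - Λ) j l * W ω l) ∂μ := by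
    intro t j
    have hm : MeasurableSpace.comap W inferInstance ≤ _ := hWmeas.comap_le
    haveI : SigmaFinite (μ.trim hm) := by
      have : IsFiniteMeasure (μ.trim hm) := isFiniteMeasure_trim hm
      infer_instance
    have hWm0 : Measurable[MeasurableSpace.comap W inferInstance] W :=
      measurable_iff_comap_le.mpr le_rfl
    have hfSM : StronglyMeasurable[MeasurableSpace.comap W inferInstance]
        (fun ω => Real.exp (t * X ω)) := by
      simp only [hX]
      have h1 : Measurable fun x : Fin k → ℝ => Real.exp (t * x i) :=
        Real.measurable_exp.comp (measurable_const.mul (measurable_pi_apply i))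
      exact (h1.comp hWm0).stronglyMeasurable
    have hIntWabs : Integrable (fun ω => |W ω j|) μ := by
      have := hIntXabs 0 j
      simpa using this
    have hg : Integrable (fun ω => W' ω j) μ := by
      refine (hIntWabs.add (integrable_const K)).mono' (hW'j j).aestronglyMeasurable ?_
      filter_upwards [hKcoord] with ω hω
      have h2 : |W' ω j| - |W ω j| ≤ |W' ω j - W ω j| := abs_sub_abs_le_abs_sub _ _
      rw [abs_sub_comm] at h2
      have := hω j
      rw [Real.norm_eq_abs]
      simp only [Pi.add_apply]
      linarith
    have hfg : Integrable ((fun ω => Real.exp (t * X ω)) * fun ω => W' ω j) μ :=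
      hIntXW' t j
    have hpull := condExp_mul_of_stronglyMeasurable_left hfSM hfg hg
    calc ∫ ω, Real.exp (t * X ω) * W' ω j ∂μ
        = ∫ ω, ((fun ω => Real.exp (t * X ω)) * fun ω => W' ω j) ω ∂μ := rfl
      _ = ∫ ω, (μ[((fun ω => Real.exp (t * X ω)) * fun ω => W' ω j) | MeasurableSpace.comap W inferInstance]) ω ∂μ := (integral_condExp hm).symm
      _ = ∫ ω, ((fun ω => Real.exp (t * X ω)) * μ[(fun ω => W' ω j) | MeasurableSpace.comap W inferInstance]) ω ∂μ :=
          integral_congr_ae hpull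
      _ = ∫ ω, Real.exp (t * X ω) * (∑ l, (1 - Λ) j l * W ω l) ∂μ := by
          refine integral_congr_ae ?_
          filter_upwards [hcond j] with ω hω
          simp only [Pi.mul_apply]
          rw [hω]
  -- the vector v = row i of Λ⁻¹
  set v : Fin k → ℝ := fun j => Λ⁻¹ i j with hv
  set D : Ω → ℝ := fun ω => ∑ j, v j * (W ω j - W' ω j) with hD
  have hDm : Measurable D := by
    apply Finset.measurable_sum
    intro j _
    exact measurable_const.mul ((hWj j).sub (hW'j j))
  have hDbound : ∀ᵐ ω ∂μ, |D ω| ≤ (1 / s) * K := by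
    filter_upwards [hK] with ω hω
    have h1 : D ω = (Λ⁻¹.mulVec fun l => W ω l - W' ω l) i := by
      simp [hD, Matrix.mulVec, dotProduct, hv]
    rw [h1]
    have h2 := abs_coord_le_norm2 (Λ⁻¹.mulVec fun l => W ω l - W' ω l) i
    have h3 := ssv_mul_le Λ (Λ⁻¹.mulVec fun l => W ω l - W' ω l)
    rw [show Λ.mulVec (Λ⁻¹.mulVec fun l => W ω l - W' ω l) = fun l => W ω l - W' ω l by
      rw [Matrix.mulVec_mulVec, Matrix.mul_nonsing_inv Λ hΛ, Matrix.one_mulVec]] at h3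
    have h4 : norm2 (Λ⁻¹.mulVec fun l => W ω l - W' ω l) ≤ (1 / s) * K := by
      rw [one_div, inv_mul_eq_div, le_div_iff₀ hspos, mul_comm]
      exact le_trans h3 hω
    exact le_trans h2 h4
  have hIntXD : ∀ t : ℝ, Integrable (fun ω => Real.exp (t * X ω) * D ω) μ := by
    intro t
    refine ((hIntX t).const_mul ((1 / s) * K)).mono'
      ((hEXm t).mul hDm).aestronglyMeasurable ?_
    filter_upwards [hDbound] with ω hω
    rw [Real.norm_eq_abs, abs_mul, Real.abs_exp]
    calc Real.exp (t * X ω) * |D ω| ≤ Real.exp (t * X ω) * ((1 / s) * K) :=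
          mul_le_mul_of_nonneg_left hω (Real.exp_pos _).le
      _ = (1 / s) * K * Real.exp (t * X ω) := by ring
  have hIntX'D : ∀ t : ℝ, Integrable (fun ω => Real.exp (t * X' ω) * D ω) μ := by
    intro t
    refine ((hIntX' t).const_mul ((1 / s) * K)).mono'
      ((hEX'm t).mul hDm).aestronglyMeasurable ?_
    filter_upwards [hDbound] with ω hω
    rw [Real.norm_eq_abs, abs_mul, Real.abs_exp]
    calc Real.exp (t * X' ω) * |D ω| ≤ Real.exp (t * X' ω) * ((1 / s) * K) :=
          mul_le_mul_of_nonneg_left hω (Real.exp_pos _).le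
      _ = (1 / s) * K * Real.exp (t * X' ω) := by ring
  -- key identity: E[e^{tX} X] = E[e^{tX} D]
  have hid : ∀ t : ℝ,
      ∫ ω, Real.exp (t * X ω) * X ω ∂μ = ∫ ω, Real.exp (t * X ω) * D ω ∂μ := by
    intro t
    have hIntsum : ∀ a : Fin k → ℝ,
        Integrable (fun ω => Real.exp (t * X ω) * ∑ l, a l * W ω l) μ := by
      intro a
      have e0 : (fun ω => Real.exp (t * X ω) * ∑ l, a l * W ω l)
          = fun ω => ∑ l, a l * (Real.exp (t * X ω) * W ω l) := by
        funext ω; rw [Finset.mul_sum]; exact Finset.sum_congr rfl fun l _ => by ring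
      rw [e0]
      exact integrable_finset_sum _ fun l _ => (hIntXW t l).const_mul _
    have hIntΛ : ∀ j, Integrable (fun ω => Real.exp (t * X ω) * Λ.mulVec (W ω) j) μ := by
      intro j
      have : (fun ω => Real.exp (t * X ω) * Λ.mulVec (W ω) j)
          = fun ω => Real.exp (t * X ω) * ∑ l, Λ j l * W ω l := rfl
      rw [this]
      exact hIntsum _
    have step1 : ∀ j, ∫ ω, Real.exp (t * X ω) * (W ω j - W' ω j) ∂μ
        = ∫ ω, Real.exp (t * X ω) * Λ.mulVec (W ω) j ∂μ := by
      intro j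
      have e1 : (fun ω => Real.exp (t * X ω) * (W ω j - W' ω j))
          = fun ω => Real.exp (t * X ω) * W ω j - Real.exp (t * X ω) * W' ω j := by
        funext ω; ring
      rw [e1, integral_sub (hIntXW t j) (hIntXW' t j), hcondInt t j,
        ← integral_sub (hIntXW t j) (hIntsum _)]
      congr 1; funext ω
      have e2 : (∑ l, (1 - Λ) j l * W ω l) = W ω j - Λ.mulVec (W ω) j := by
        have e3 : ((1 - Λ).mulVec (W ω)) j = W ω j - Λ.mulVec (W ω) j := by
          rw [Matrix.sub_mulVec, Matrix.one_mulVec]; rfl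
        rw [← e3]; rfl
      rw [e2]; ring
    have hIntjj : ∀ j, Integrable (fun ω => v j * (Real.exp (t * X ω) * (W ω j - W' ω j))) μ := by
      intro j
      have e1 : (fun ω => v j * (Real.exp (t * X ω) * (W ω j - W' ω j)))
          = fun ω => v j * (Real.exp (t * X ω) * W ω j - Real.exp (t * X ω) * W' ω j) := by
        funext ω; ring
      rw [e1]
      exact ((hIntXW t j).sub (hIntXW' t j)).const_mul _
    calc ∫ ω, Real.exp (t * X ω) * X ω ∂μ
        = ∫ ω, ∑ j, v j * (Real.exp (t * X ω) * Λ.mulVec (W ω) j) ∂μ := by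
          congr 1; funext ω
          have h6 : Λ⁻¹.mulVec (Λ.mulVec (W ω)) = W ω := by
            rw [Matrix.mulVec_mulVec, Matrix.nonsing_inv_mul Λ hΛ, Matrix.one_mulVec]
          have h5 : ∑ j, v j * Λ.mulVec (W ω) j = X ω := by
            calc ∑ j, v j * Λ.mulVec (W ω) j = Λ⁻¹.mulVec (Λ.mulVec (W ω)) i := rfl
              _ = W ω i := by rw [h6]
          rw [← h5, Finset.mul_sum]
          exact Finset.sum_congr rfl fun j _ => by ring
      _ = ∑ j, v j * ∫ ω, Real.exp (t * X ω) * Λ.mulVec (W ω) j ∂μ := by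
          rw [integral_finset_sum _ fun j _ => (hIntΛ j).const_mul (v j)]
          exact Finset.sum_congr rfl fun j _ => integral_const_mul _ _
      _ = ∑ j, v j * ∫ ω, Real.exp (t * X ω) * (W ω j - W' ω j) ∂μ := by
          exact Finset.sum_congr rfl fun j _ => by rw [step1 j]
      _ = ∫ ω, ∑ j, v j * (Real.exp (t * X ω) * (W ω j - W' ω j)) ∂μ := by
          rw [integral_finset_sum _ fun j _ => hIntjj j]
          exact Finset.sum_congr rfl fun j _ => (integral_const_mul _ _).symm
      _ = ∫ ω, Real.exp (t * X ω) * D ω ∂μ := by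
          congr 1; funext ω
          simp only [hD]
          rw [Finset.mul_sum]
          exact Finset.sum_congr rfl fun j _ => by ring
  -- exchangeability: E[e^{tX} D] = - E[e^{tX'} D]
  have hex : ∀ t : ℝ,
      ∫ ω, Real.exp (t * X ω) * D ω ∂μ = -∫ ω, Real.exp (t * X' ω) * D ω ∂μ := by
    intro t
    have hgm : Measurable fun p : (Fin k → ℝ) × (Fin k → ℝ) =>
        Real.exp (t * p.1 i) * ∑ j, v j * (p.1 j - p.2 j) := by
      refine (Real.measurable_exp.comp
        (measurable_const.mul ((measurable_pi_apply i).comp measurable_fst))).mul ?_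
      exact Finset.measurable_sum _ fun j _ =>
        measurable_const.mul (((measurable_pi_apply j).comp measurable_fst).sub
          ((measurable_pi_apply j).comp measurable_snd))
    have h := (hexch.comp hgm).integral_eq
    simp only [Function.comp] at h
    have h7 : ∀ ω, ∑ j, v j * (W' ω j - W ω j) = -∑ j, v j * (W ω j - W' ω j) := by
      intro ω
      rw [← Finset.sum_neg_distrib]
      exact Finset.sum_congr rfl fun j _ => by ring
    simp only [hX, hX', hD]
    rw [h, ← integral_neg]
    congr 1; funext ω
    rw [h7 ω]; ring
  -- the derivative bound |L t| ≤ c |t| m t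
  have habs : ∀ t : ℝ, |∫ ω, Real.exp (t * X ω) * X ω ∂μ| ≤ c * |t| * m t := by
    intro t
    have hIntf : Integrable (fun ω => (Real.exp (t * X ω) - Real.exp (t * X' ω)) * D ω) μ := by
      have e1 : (fun ω => (Real.exp (t * X ω) - Real.exp (t * X' ω)) * D ω)
          = fun ω => Real.exp (t * X ω) * D ω - Real.exp (t * X' ω) * D ω := by
        funext ω; ring
      rw [e1]
      exact (hIntXD t).sub (hIntX'D t)
    have hhalf : ∫ ω, Real.exp (t * X ω) * X ω ∂μ
        = (1 / 2) * ∫ ω, (Real.exp (t * X ω) - Real.exp (t * X' ω)) * D ω ∂μ := by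
      have e2 : ∫ ω, (Real.exp (t * X ω) - Real.exp (t * X' ω)) * D ω ∂μ
          = ∫ ω, Real.exp (t * X ω) * D ω ∂μ - ∫ ω, Real.exp (t * X' ω) * D ω ∂μ := by
        rw [← integral_sub (hIntXD t) (hIntX'D t)]
        congr 1; funext ω; ring
      rw [hid t, e2]
      have := hex t
      linarith
    set g : Ω → ℝ := fun ω => (|t| * K * ((1 / s) * K))
      * (Real.exp (t * X ω) + Real.exp (t * X' ω)) with hg
    have hIntg : Integrable g μ := ((hIntX t).add (hIntX' t)).const_mul _
    have hptwise : ∀ᵐ ω ∂μ,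
        |(Real.exp (t * X ω) - Real.exp (t * X' ω)) * D ω| ≤ g ω := by
      filter_upwards [hKcoord, hDbound] with ω h1 h2
      have h3 := abs_exp_sub_exp_le (t * X ω) (t * X' ω)
      have h4 : |t * X ω - t * X' ω| ≤ |t| * K := by
        rw [← mul_sub, abs_mul]
        exact mul_le_mul_of_nonneg_left (h1 i) (abs_nonneg t)
      have hsum : (0:ℝ) ≤ Real.exp (t * X ω) + Real.exp (t * X' ω) :=
        by positivity
      have h5 : |Real.exp (t * X ω) - Real.exp (t * X' ω)|
          ≤ |t| * K * (Real.exp (t * X ω) + Real.exp (t * X' ω)) :=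
        h3.trans (mul_le_mul_of_nonneg_right h4 hsum)
      rw [abs_mul]
      calc |Real.exp (t * X ω) - Real.exp (t * X' ω)| * |D ω|
          ≤ (|t| * K * (Real.exp (t * X ω) + Real.exp (t * X' ω))) * ((1 / s) * K) :=
            mul_le_mul h5 h2 (abs_nonneg _) (by positivity)
        _ = g ω := by rw [hg]; ring
    have h8 : |∫ ω, (Real.exp (t * X ω) - Real.exp (t * X' ω)) * D ω ∂μ|
        ≤ ∫ ω, g ω ∂μ := by
      have hn := norm_integral_le_integral_norm
        (fun ω => (Real.exp (t * X ω) - Real.exp (t * X' ω)) * D ω) (μ := μ)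
      simp only [Real.norm_eq_abs] at hn
      exact hn.trans (integral_mono_ae hIntf.abs hIntg hptwise)
    have h9 : ∫ ω, g ω ∂μ = (|t| * K * ((1 / s) * K)) * (m t + m t) := by
      rw [hg, integral_const_mul, integral_add (hIntX t) (hIntX' t), hIntExpX' t]
    rw [hhalf, abs_mul, abs_of_nonneg (by norm_num : (0:ℝ) ≤ (1:ℝ)/2)]
    have h10 := le_trans h8 (le_of_eq h9)
    have hmt := (hmpos t).le
    calc (1/2) * |∫ ω, (Real.exp (t * X ω) - Real.exp (t * X' ω)) * D ω ∂μ|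
        ≤ (1/2) * ((|t| * K * ((1 / s) * K)) * (m t + m t)) := by linarith
      _ = c * |t| * m t := by rw [hc]; ring
  -- derivative of m
  have hderiv : ∀ t : ℝ, HasDerivAt m (∫ ω, Real.exp (t * X ω) * X ω ∂μ) t := by
    intro t
    have hbound : ∀ᵐ ω ∂μ, ∀ u ∈ Metric.ball t 1,
        ‖Real.exp (u * X ω) * X ω‖
          ≤ Real.exp ((t+2) * X ω) + 2 * Real.exp (t * X ω) + Real.exp ((t-2) * X ω) := by
      refine ae_of_all _ fun ω => fun u hu => ?_
      rw [Metric.mem_ball, Real.dist_eq, abs_lt] at hu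
      have hu1 : u ≤ t + 1 := by linarith [hu.2]
      have hu2 : t - 1 ≤ u := by linarith [hu.1]
      have hstep1 : Real.exp (u * X ω) ≤ Real.exp ((t+1) * X ω) + Real.exp ((t-1) * X ω) := by
        rcases le_total 0 (X ω) with hx | hx
        · have : u * X ω ≤ (t+1) * X ω := mul_le_mul_of_nonneg_right hu1 hx
          exact (Real.exp_le_exp.mpr this).trans (le_add_of_nonneg_right (Real.exp_pos _).le)
        · have : u * X ω ≤ (t-1) * X ω := mul_le_mul_of_nonpos_right hu2 hx
          exact (Real.exp_le_exp.mpr this).trans (le_add_of_nonneg_left (Real.exp_pos _).le)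
      have hstep2 : |X ω| ≤ Real.exp (X ω) + Real.exp (-X ω) := abs_le_exp_add_exp_neg _
      have hexpand : (Real.exp ((t+1) * X ω) + Real.exp ((t-1) * X ω))
            * (Real.exp (X ω) + Real.exp (-X ω))
          = Real.exp ((t+2) * X ω) + 2 * Real.exp (t * X ω) + Real.exp ((t-2) * X ω) := by
        rw [add_mul, mul_add, mul_add, ← Real.exp_add, ← Real.exp_add, ← Real.exp_add,
          ← Real.exp_add,
          show (t+1) * X ω + X ω = (t+2) * X ω by ring,
          show (t+1) * X ω + -X ω = t * X ω by ring,
          show (t-1) * X ω + X ω = t * X ω by ring,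
          show (t-1) * X ω + -X ω = (t-2) * X ω by ring]
        ring
      rw [Real.norm_eq_abs, abs_mul, Real.abs_exp]
      calc Real.exp (u * X ω) * |X ω|
          ≤ (Real.exp ((t+1) * X ω) + Real.exp ((t-1) * X ω))
              * (Real.exp (X ω) + Real.exp (-X ω)) :=
            mul_le_mul hstep1 hstep2 (abs_nonneg _) (by positivity)
        _ = _ := hexpand
    have hboundInt : Integrable (fun ω => Real.exp ((t+2) * X ω)
        + 2 * Real.exp (t * X ω) + Real.exp ((t-2) * X ω)) μ :=
      ((hIntX (t+2)).add ((hIntX t).const_mul 2)).add (hIntX (t-2))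
    have hdiff : ∀ᵐ ω ∂μ, ∀ u ∈ Metric.ball t 1,
        HasDerivAt (fun u => Real.exp (u * X ω)) (Real.exp (u * X ω) * X ω) u :=
      ae_of_all _ fun ω u _ => (hasDerivAt_mul_const (X ω)).exp
    have key := hasDerivAt_integral_of_dominated_loc_of_deriv_le (Metric.ball_mem_nhds t one_pos)
      (Filter.Eventually.of_forall fun u => (hEXm u).aestronglyMeasurable)
      (hIntX t) (((hEXm t).mul hXm).aestronglyMeasurable)
      hbound hboundInt hdiff
    rw [hm]
    exact key.2
  -- Gronwall: m t ≤ exp (c t² / 2)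
  have hmbound : ∀ t : ℝ, m t ≤ Real.exp (c * t ^ 2 / 2) := by
    have hm0 : m 0 = 1 := by
      rw [hm]
      simp
    set φ : ℝ → ℝ := fun t => Real.log (m t) - c * t ^ 2 / 2 with hφ
    have hφd : ∀ t, HasDerivAt φ
        ((∫ ω, Real.exp (t * X ω) * X ω ∂μ) / m t - c * t) t := by
      intro t
      have h1 := (hderiv t).log (hmpos t).ne'
      have h2 : HasDerivAt (fun u : ℝ => c * u ^ 2 / 2) (c * t) t := by
        have h3 := ((hasDerivAt_pow 2 t).const_mul c).div_const 2
        simpa using h3.congr_deriv (by ring)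
      exact h1.sub h2
    have hcont : Continuous φ := continuous_iff_continuousAt.mpr fun t => (hφd t).continuousAt
    have hφ0 : φ 0 = 0 := by
      rw [hφ]; simp [hm0]
    have hfin : ∀ t, φ t ≤ 0 → m t ≤ Real.exp (c * t ^ 2 / 2) := by
      intro t ht
      rw [hφ] at ht
      simp only [sub_nonpos] at ht
      calc m t = Real.exp (Real.log (m t)) := (Real.exp_log (hmpos t)).symm
        _ ≤ Real.exp (c * t ^ 2 / 2) := Real.exp_le_exp.mpr ht
    intro t
    rcases le_total 0 t with ht | ht
    · have hanti : AntitoneOn φ (Set.Ici (0:ℝ)) := by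
        apply antitoneOn_of_deriv_nonpos (convex_Ici 0) hcont.continuousOn
          (fun x _ => (hφd x).differentiableAt.differentiableWithinAt)
        intro x hx
        rw [interior_Ici] at hx
        rw [(hφd x).deriv]
        have hxpos : 0 < x := hx
        have hb := habs x
        rw [abs_of_pos hxpos] at hb
        have h3 : (∫ ω, Real.exp (x * X ω) * X ω ∂μ) / m x ≤ c * x := by
          rw [div_le_iff₀ (hmpos x)]
          calc (∫ ω, Real.exp (x * X ω) * X ω ∂μ)
              ≤ |∫ ω, Real.exp (x * X ω) * X ω ∂μ| := le_abs_self _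
            _ ≤ c * x * m x := hb
        linarith
      have hle := hanti (Set.mem_Ici.mpr le_rfl) (Set.mem_Ici.mpr ht) ht
      rw [hφ0] at hle
      exact hfin t hle
    · have hmono : MonotoneOn φ (Set.Iic (0:ℝ)) := by
        apply monotoneOn_of_deriv_nonneg (convex_Iic 0) hcont.continuousOn
          (fun x _ => (hφd x).differentiableAt.differentiableWithinAt)
        intro x hx
        rw [interior_Iic] at hx
        rw [(hφd x).deriv]
        have hxneg : x < 0 := hx
        have hb := habs x
        rw [abs_of_neg hxneg] at hb
        have h3 : c * x ≤ (∫ ω, Real.exp (x * X ω) * X ω ∂μ) / m x := by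
          rw [le_div_iff₀ (hmpos x)]
          calc c * x * m x = -(c * -x * m x) := by ring
            _ ≤ -|∫ ω, Real.exp (x * X ω) * X ω ∂μ| := by linarith
            _ ≤ ∫ ω, Real.exp (x * X ω) * X ω ∂μ := neg_abs_le _
        linarith
      have hle := hmono (Set.mem_Iic.mpr ht) (Set.mem_Iic.mpr le_rfl) ht
      rw [hφ0] at hle
      exact hfin t hle
  -- Chernoff
  set t₀ : ℝ := w / c with ht₀
  have ht₀0 : 0 ≤ t₀ := div_nonneg hw hcpos.le
  have hfinal : Real.exp (-t₀ * w) * Real.exp (c * t₀ ^ 2 / 2)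
      = Real.exp (-(w ^ 2 / (2 * K ^ 2 * (1 / s)))) := by
    rw [← Real.exp_add]
    congr 1
    rw [ht₀, hc]
    field_simp
    ring
  constructor
  · have h1 := measure_ge_le_exp_mul_mgf (X := X) (μ := μ) w ht₀0 (hIntX t₀)
    have h2 : Real.exp (-t₀ * w) * mgf X μ t₀
        ≤ Real.exp (-(w ^ 2 / (2 * K ^ 2 * (1 / s)))) := by
      rw [← hfinal, hmgfeq]
      exact mul_le_mul_of_nonneg_left (hmbound t₀) (Real.exp_pos _).le
    have : μ {ω | w ≤ X ω} = ENNReal.ofReal ((μ {ω | w ≤ X ω}).toReal) :=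
      (ENNReal.ofReal_toReal (measure_ne_top μ _)).symm
    rw [show {ω | w ≤ W ω i} = {ω | w ≤ X ω} from rfl, this]
    exact ENNReal.ofReal_le_ofReal (le_trans h1 h2)
  · have h1 := measure_le_le_exp_mul_mgf (X := X) (μ := μ) (-w)
      (neg_nonpos.mpr ht₀0) (hIntX (-t₀))
    have h2 : Real.exp (-(-t₀) * -w) * mgf X μ (-t₀)
        ≤ Real.exp (-(w ^ 2 / (2 * K ^ 2 * (1 / s)))) := by
      rw [show -(-t₀) * -w = -t₀ * w by ring, ← hfinal, hmgfeq]
      have := hmbound (-t₀)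
      rw [show c * (-t₀) ^ 2 / 2 = c * t₀ ^ 2 / 2 by ring] at this
      exact mul_le_mul_of_nonneg_left this (Real.exp_pos _).le
    have : μ {ω | X ω ≤ -w} = ENNReal.ofReal ((μ {ω | X ω ≤ -w}).toReal) :=
      (ENNReal.ofReal_toReal (measure_ne_top μ _)).symm
    rw [show {ω | W ω i ≤ -w} = {ω | X ω ≤ -w} from rfl, this]
    exact ENNReal.ofReal_le_ofReal (le_trans h1 h2)
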